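/- Let f : ℝⁿ → ℝ and G : ℝⁿ → S^m be twice continuously differentiable. If (x,Y,Λ) ∈ ℝⁿ × S^m × S^m is a KKT triple of (P2) such that Λ is positive semidefinite, then (x,Λ) is a KKT pair of (P1), i.e., ∇f(x) − DG(x)*Λ = 0, Λ is PSD, G(x) is PSD, and Λ∘G(x) = 0. -/

import Mathlib

open Matrix

noncomputable section

def jmul {m : ℕ} (A B : Matrix (Fin m) (Fin m) ℝ) : Matrix (Fin m) (Fin m) ℝ :=
  (1 / 2 : ℝ) • (A * B + B * A)

def minner {m : ℕ} (A B : Matrix (Fin m) (Fin m) ℝ) : ℝ :=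
  (A * B).trace

def memPhi {m : ℕ} (Λ Y : Matrix (Fin m) (Fin m) ℝ) : Prop :=
  ∀ W : Matrix (Fin m) (Fin m) ℝ, W.IsSymm → W ≠ 0 → jmul Y W = 0 →
    0 < minner (jmul W W) Λ

def pderivG {n m : ℕ} (G : (Fin n → ℝ) → Matrix (Fin m) (Fin m) ℝ)
    (x : Fin n → ℝ) (k : Fin n) : Matrix (Fin m) (Fin m) ℝ :=
  Matrix.of fun i j => fderiv ℝ (fun y => G y i j) x (Pi.single k 1)

def dirDerivG {n m : ℕ} (G : (Fin n → ℝ) → Matrix (Fin m) (Fin m) ℝ)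
    (x v : Fin n → ℝ) : Matrix (Fin m) (Fin m) ℝ :=
  ∑ k, v k • pderivG G x k

def adjDG {n m : ℕ} (G : (Fin n → ℝ) → Matrix (Fin m) (Fin m) ℝ)
    (x : Fin n → ℝ) (W : Matrix (Fin m) (Fin m) ℝ) : Fin n → ℝ :=
  fun k => minner (pderivG G x k) W

def gradf {n : ℕ} (f : (Fin n → ℝ) → ℝ) (x : Fin n → ℝ) : Fin n → ℝ :=
  fun k => fderiv ℝ f x (Pi.single k 1)

def KKT1 {n m : ℕ} (f : (Fin n → ℝ) → ℝ) (G : (Fin n → ℝ) → Matrix (Fin m) (Fin m) ℝ)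
    (x : Fin n → ℝ) (Λ : Matrix (Fin m) (Fin m) ℝ) : Prop :=
  gradf f x = adjDG G x Λ ∧ Λ.PosSemidef ∧ (G x).PosSemidef ∧ jmul Λ (G x) = 0

def KKT2 {n m : ℕ} (f : (Fin n → ℝ) → ℝ) (G : (Fin n → ℝ) → Matrix (Fin m) (Fin m) ℝ)
    (x : Fin n → ℝ) (Y Λ : Matrix (Fin m) (Fin m) ℝ) : Prop :=
  gradf f x = adjDG G x Λ ∧ jmul Λ Y = 0 ∧ G x = jmul Y Y

def hessQ {n m : ℕ} (f : (Fin n → ℝ) → ℝ) (G : (Fin n → ℝ) → Matrix (Fin m) (Fin m) ℝ)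
    (Λ : Matrix (Fin m) (Fin m) ℝ) (x v : Fin n → ℝ) : ℝ :=
  iteratedFDeriv ℝ 2 (fun y => f y - minner (G y) Λ) x ![v, v]

def SOSCNLP {n m : ℕ} (f : (Fin n → ℝ) → ℝ) (G : (Fin n → ℝ) → Matrix (Fin m) (Fin m) ℝ)
    (x : Fin n → ℝ) (Y Λ : Matrix (Fin m) (Fin m) ℝ) : Prop :=
  ∀ (v : Fin n → ℝ) (W : Matrix (Fin m) (Fin m) ℝ), W.IsSymm →
    ¬(v = 0 ∧ W = 0) → dirDerivG G x v = (2 : ℝ) • jmul Y W →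
    0 < hessQ f G Λ x v + 2 * minner (jmul W W) Λ

def SONCNLP {n m : ℕ} (f : (Fin n → ℝ) → ℝ) (G : (Fin n → ℝ) → Matrix (Fin m) (Fin m) ℝ)
    (x : Fin n → ℝ) (Y Λ : Matrix (Fin m) (Fin m) ℝ) : Prop :=
  ∀ (v : Fin n → ℝ) (W : Matrix (Fin m) (Fin m) ℝ), W.IsSymm →
    dirDerivG G x v = (2 : ℝ) • jmul Y W →
    0 ≤ hessQ f G Λ x v + 2 * minner (jmul W W) Λ

def LICQ {n m : ℕ} (G : (Fin n → ℝ) → Matrix (Fin m) (Fin m) ℝ)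
    (x : Fin n → ℝ) (Y : Matrix (Fin m) (Fin m) ℝ) : Prop :=
  ∀ W : Matrix (Fin m) (Fin m) ℝ, W.IsSymm → jmul Y W = 0 → adjDG G x W = 0 → W = 0

def Nondeg {n m : ℕ} (G : (Fin n → ℝ) → Matrix (Fin m) (Fin m) ℝ)
    (x : Fin n → ℝ) : Prop :=
  ∀ W : Matrix (Fin m) (Fin m) ℝ, W.IsSymm → G x * W = 0 → adjDG G x W = 0 → W = 0

def CritCone {n m : ℕ} (f : (Fin n → ℝ) → ℝ) (G : (Fin n → ℝ) → Matrix (Fin m) (Fin m) ℝ)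
    (x : Fin n → ℝ) : Set (Fin n → ℝ) :=
  {d | (∀ u : Fin m → ℝ, G x *ᵥ u = 0 → 0 ≤ u ⬝ᵥ (dirDerivG G x d *ᵥ u)) ∧
    gradf f x ⬝ᵥ d = 0}

def IsMPInv {m : ℕ} (A P : Matrix (Fin m) (Fin m) ℝ) : Prop :=
  A * P * A = A ∧ P * A * P = P ∧ (A * P)ᵀ = A * P ∧ (P * A)ᵀ = P * A

def Hmat {n m : ℕ} (G : (Fin n → ℝ) → Matrix (Fin m) (Fin m) ℝ)
    (x : Fin n → ℝ) (Λ P : Matrix (Fin m) (Fin m) ℝ) : Matrix (Fin n) (Fin n) ℝ :=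
  Matrix.of fun i j => 2 * (pderivG G x i * P * pderivG G x j * Λ).trace

lemma aux_trace_mul_transpose_self_eq_zero {m : ℕ} {A : Matrix (Fin m) (Fin m) ℝ}
    (h : (A * Aᵀ).trace = 0) : A = 0 := by
  have h' : ∑ i, ∑ j, (A i j)^2 = 0 := by
    rw [← h, Matrix.trace]
    simp [Matrix.mul_apply, Matrix.diag, sq]
  have hnn : ∀ i ∈ Finset.univ, (0:ℝ) ≤ ∑ j, (A i j)^2 :=
    fun i _ => Finset.sum_nonneg fun j _ => sq_nonneg _
  ext i j
  have h1 := (Finset.sum_eq_zero_iff_of_nonneg hnn).mp h' i (Finset.mem_univ i)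
  have h2 := (Finset.sum_eq_zero_iff_of_nonneg (fun j _ => sq_nonneg (A i j))).mp h1 j
    (Finset.mem_univ j)
  simpa using pow_eq_zero_iff (n := 2) (by norm_num) |>.mp h2

open scoped MatrixOrder in
lemma aux_key {m : ℕ} (Y Λ : Matrix (Fin m) (Fin m) ℝ)
    (hY : Y.IsSymm) (hΛ : Λ.PosSemidef) (h : Λ * Y + Y * Λ = 0) : Λ * Y = 0 := by
  have hSS : CFC.sqrt Λ * CFC.sqrt Λ = Λ := CFC.sqrt_mul_sqrt_self Λ hΛ.nonneg
  set S := CFC.sqrt Λ with hSdef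
  have hSsym : Sᵀ = S := by
    have := (CFC.sqrt_nonneg Λ).posSemidef.1
    simpa [Matrix.IsHermitian, Matrix.conjTranspose_eq_transpose_of_trivial] using this
  have hYsym : Yᵀ = Y := hY
  have hanti : Λ * Y = -(Y * Λ) := by
    have := h; rw [add_eq_zero_iff_eq_neg] at this; exact this
  -- trace of (ΛY)*Y is zero
  have htr0 : ((Λ * Y) * Y).trace = 0 := by
    have e0 : Λ * Y * Y + Y * Λ * Y = 0 := by
      rw [← add_mul, h, zero_mul]
    have e1 : (Λ * Y) * Y = -(Y * (Λ * Y)) := by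
      rw [← mul_assoc]; exact eq_neg_of_add_eq_zero_left e0
    have : ((Λ * Y) * Y).trace = -((Λ * Y) * Y).trace := by
      conv_lhs => rw [e1]
      rw [Matrix.trace_neg, Matrix.trace_mul_comm]
    linarith
  -- trace of (SY)(SY)ᵀ is zero
  have htr : ((S * Y) * (S * Y)ᵀ).trace = 0 := by
    have e1 : (S * Y) * (S * Y)ᵀ = S * (Y * (Y * S)) := by
      rw [Matrix.transpose_mul, hSsym, hYsym]; noncomm_ring
    rw [e1, Matrix.trace_mul_comm, show Y * (Y * S) * S = Y * (Y * Λ) by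
      rw [← hSS]; noncomm_ring, Matrix.trace_mul_comm,
      show Y * Λ * Y = -((Λ * Y) * Y) by
        rw [show Y * Λ = -(Λ * Y) from eq_neg_of_add_eq_zero_left (by rw [add_comm]; exact h),
          neg_mul],
      Matrix.trace_neg, htr0, neg_zero]
  have hSY : S * Y = 0 := aux_trace_mul_transpose_self_eq_zero htr
  calc Λ * Y = S * (S * Y) := by rw [← hSS]; noncomm_ring
    _ = 0 := by rw [hSY, mul_zero]

lemma aux_symm_sq_psd {m : ℕ} (Y : Matrix (Fin m) (Fin m) ℝ) (hY : Y.IsSymm) :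
    (Y * Y).PosSemidef := by
  have hYH : Yᴴ = Y := by
    ext i j
    simpa [Matrix.conjTranspose] using congrFun (congrFun hY i) j
  rw [show Y * Y = Yᴴ * Y by rw [hYH]]
  exact Matrix.posSemidef_conjTranspose_mul_self Y

theorem stmt6 {n m : ℕ} (f : (Fin n → ℝ) → ℝ) (G : (Fin n → ℝ) → Matrix (Fin m) (Fin m) ℝ)
    (hf : ContDiff ℝ 2 f) (hG : ∀ i j, ContDiff ℝ 2 fun y => G y i j)
    (x : Fin n → ℝ) (Y Λ : Matrix (Fin m) (Fin m) ℝ)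
    (hY : Y.IsSymm) (hΛ : Λ.PosSemidef) (hKKT : KKT2 f G x Y Λ) :
    KKT1 f G x Λ := by
  obtain ⟨hg, hjY, hGY⟩ := hKKT
  have hYY : G x = Y * Y := by
    rw [hGY]; unfold jmul; module
  have hsum : Λ * Y + Y * Λ = 0 := by
    unfold jmul at hjY
    rcases smul_eq_zero.mp hjY with h | h
    · norm_num at h
    · exact h
  have hΛY : Λ * Y = 0 := aux_key Y Λ hY hΛ hsum
  have hYΛ : Y * Λ = 0 := by rwa [hΛY, zero_add] at hsum
  refine ⟨hg, hΛ, ?_, ?_⟩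
  · rw [hYY]; exact aux_symm_sq_psd Y hY
  · unfold jmul
    rw [hYY, ← mul_assoc, hΛY, zero_mul, mul_assoc, hYΛ, mul_zero, add_zero, smul_zero]
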